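/- For n ≥ 1 and k, r ≥ 0 with k + r ≤ n-1, the number of words w of length n-1 over the alphabet {L^u, L^m, R} with exactly k occurrences of L^m and r occurrences of L^u, such that no occurrence of L^m is immediately followed by an occurrence of R, equals C(n-k-1, r) · C(r+k, r). -/

import Mathlib

/-- The alphabet {Lᵘ, Lᵐ, R} for properly-marked {L,R}-words. -/
inductive PMLetter
  | Lu : PMLetter
  | Lm : PMLetter
  | R : PMLetter
deriving DecidableEq

/-- A word is properly marked if no occurrence of Lᵐ is immediately followed by R. -/
def ProperlyMarked (w : List PMLetter) : Prop :=
  w.Chain' (fun a b => a = PMLetter.Lm → b ≠ PMLetter.R)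

instance : Fintype PMLetter :=
  ⟨⟨{PMLetter.Lu, PMLetter.Lm, PMLetter.R}, by decide⟩, fun x => by cases x <;> decide⟩

/-- counting function: words of length m, k Lm's, r Lu's, properly marked,
and if b then first letter is not R. -/
def pmF : ℕ → ℕ → ℕ → Bool → ℕ
  | 0, 0, 0, _ => 1
  | 0, _+1, _, _ => 0
  | 0, 0, _+1, _ => 0
  | m+1, k, r, b =>
      (if b then 0 else pmF m k r false)
      + (match r with | 0 => 0 | r'+1 => pmF m k r' false)
      + (match k with | 0 => 0 | k'+1 => pmF m k' r true)

lemma pmF_zero : ∀ m k r b, m < k + r → pmF m k r b = 0 := by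
  intro m
  induction m with
  | zero =>
    intro k r b h
    match k, r with
    | k+1, r => rfl
    | 0, r+1 => rfl
  | succ m ih =>
    intro k r b h
    show (if b then 0 else pmF m k r false) + _ + _ = 0
    rw [ih k r false (by omega)]
    have h2 : (match r with | 0 => 0 | r'+1 => pmF m k r' false) = 0 := by
      match r with
      | 0 => rfl
      | r'+1 => exact ih k r' false (by omega)
    have h3 : (match k with | 0 => 0 | k'+1 => pmF m k' r true) = 0 := by
      match k with
      | 0 => rfl
      | k'+1 => exact ih k' r true (by omega)
    rw [h2, h3]
    simp

lemma pmF_closed : ∀ m,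
    (∀ k r, k + r ≤ m → pmF m k r false = (m-k).choose r * (k+r).choose r)
    ∧ (∀ k, k ≤ m → pmF m k 0 true = if k = m then 1 else 0)
    ∧ (∀ k r', k + r' + 1 ≤ m → pmF m k (r'+1) true = (m-k-1).choose r' * (k+r'+1).choose (r'+1)) := by
  intro m
  induction m with
  | zero =>
    refine ⟨?_, ?_, ?_⟩
    · intro k r h
      obtain ⟨rfl, rfl⟩ : k = 0 ∧ r = 0 := by omega
      rfl
    · intro k h
      obtain rfl : k = 0 := by omega
      rfl
    · intro k r' h; omega
  | succ m ih =>
    obtain ⟨ihA, ihB0, ihB⟩ := ih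
    refine ⟨?_, ?_, ?_⟩
    · -- A
      intro k r h
      show (pmF m k r false) + _ + _ = _
      match k, r with
      | 0, 0 => simp [ihA 0 0 (by omega)]
      | k'+1, 0 =>
        have hB0 := ihB0 k' (by omega)
        show pmF m (k'+1) 0 false + 0 + pmF m k' 0 true = _
        by_cases hk : k' + 1 ≤ m
        · rw [ihA (k'+1) 0 (by omega), hB0]
          have : ¬ (k' = m) := by omega
          simp [this]
        · have hk1 : k' = m := by omega
          rw [pmF_zero m (k'+1) 0 false (by omega), hB0]
          simp [hk1]
      | 0, r'+1 =>
        show pmF m 0 (r'+1) false + pmF m 0 r' false + 0 = _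
        rw [ihA 0 r' (by omega)]
        by_cases hr : r' + 1 ≤ m
        · rw [ihA 0 (r'+1) (by omega)]
          simp only [Nat.sub_zero, Nat.zero_add, Nat.choose_self, Nat.mul_one]
          rw [Nat.choose_succ_succ m r']
          simp only [Nat.succ_eq_add_one]
          omega
        · have hm : m = r' := by omega
          rw [pmF_zero m 0 (r'+1) false (by omega)]
          subst hm
          simp
      | k'+1, r'+1 =>
        set k := k' + 1
        set r := r' + 1
        show pmF m k r false + pmF m k r' false + pmF m k' r true = _
        rw [ihA k r' (by omega), ihB k' r' (by omega)]
        have e1 : m - k' - 1 = m - k := by omega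
        have e2 : k' + r' + 1 = k + r' := by omega
        rw [e1, e2]
        by_cases hkr : k + r ≤ m
        · rw [ihA k r hkr]
          have e3 : m + 1 - k = (m - k) + 1 := by omega
          have e4 : k + r = (k + r') + 1 := by omega
          rw [e3, e4, Nat.choose_succ_succ (m-k) r', Nat.choose_succ_succ (k+r') r']
          ring
        · rw [pmF_zero m k r false (by omega)]
          have e3 : m - k = r' := by omega
          have e4 : m + 1 - k = r' + 1 := by omega
          have e5 : k + r = (k + r') + 1 := by omega
          rw [e3, e4, e5, Nat.choose_succ_succ (k+r') r']
          simp [Nat.choose_self, r]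
    · -- B0
      intro k h
      show (if (true:Bool) then 0 else pmF m k 0 false) + 0 + _ = _
      match k with
      | 0 =>
        show 0 + 0 + 0 = _
        have : ¬ ((0:ℕ) = m + 1) := by omega
        simp [this]
      | k'+1 =>
        show 0 + 0 + pmF m k' 0 true = _
        rw [ihB0 k' (by omega)]
        simp only [Nat.zero_add]
        by_cases hk : k' = m
        · simp [hk]
        · have : ¬ (k' + 1 = m + 1) := by omega
          simp [hk, this]
    · -- B
      intro k r' h
      show (if (true:Bool) then 0 else pmF m k (r'+1) false) + pmF m k r' false + _ = _
      rw [if_pos rfl, ihA k r' (by omega)]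
      match k with
      | 0 =>
        show 0 + (m - 0).choose r' * (0+r').choose r' + 0 = _
        simp
      | k'+1 =>
        show 0 + _ + pmF m k' (r'+1) true = _
        rw [ihB k' r' (by omega)]
        have e1 : m - k' - 1 = m - (k'+1) := by omega
        have e2 : k' + r' + 1 = (k'+1) + r' := by omega
        have e3 : m + 1 - (k'+1) - 1 = m - (k'+1) := by omega
        rw [e1, e2, e3, Nat.choose_succ_succ ((k'+1)+r') r']
        ring

def PMS (m k r : ℕ) (b : Bool) : Set (List PMLetter) :=
  {w | w.length = m ∧ ProperlyMarked w ∧ w.count PMLetter.Lm = k ∧ w.count PMLetter.Lu = r ∧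
    (b = true → w.head? ≠ some PMLetter.R)}

lemma PMS_finite (m k r : ℕ) (b : Bool) : (PMS m k r b).Finite :=
  (List.finite_length_eq PMLetter m).subset fun _ hw => hw.1

lemma disj_cons_images {a b : PMLetter} (hab : a ≠ b) (X Y : Set (List PMLetter)) :
    Disjoint ((a :: ·) '' X) ((b :: ·) '' Y) := by
  rw [Set.disjoint_left]
  rintro w ⟨t, _, rfl⟩ ⟨s, _, hw⟩
  simp only [List.cons.injEq] at hw
  exact hab hw.1.symm

lemma ncard3 (X1 X2 X3 : Set (List PMLetter)) (f1 : X1.Finite) (f2 : X2.Finite) (f3 : X3.Finite) :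
    (((PMLetter.R :: ·) '' X1) ∪ ((PMLetter.Lu :: ·) '' X2) ∪ ((PMLetter.Lm :: ·) '' X3)).ncard
      = X1.ncard + X2.ncard + X3.ncard := by
  rw [Set.ncard_union_eq (Set.disjoint_union_left.mpr
        ⟨disj_cons_images (by simp) _ _, disj_cons_images (by simp) _ _⟩)
      ((f1.image _).union (f2.image _)) (f3.image _),
    Set.ncard_union_eq (disj_cons_images (by simp) _ _) (f1.image _) (f2.image _),
    Set.ncard_image_of_injective _ List.cons_injective,
    Set.ncard_image_of_injective _ List.cons_injective,
    Set.ncard_image_of_injective _ List.cons_injective]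

lemma PMS_succ_eq (m k r : ℕ) (b : Bool) :
    PMS (m+1) k r b =
      ((PMLetter.R :: ·) '' (if b then ∅ else PMS m k r false))
      ∪ ((PMLetter.Lu :: ·) '' (match r with | 0 => ∅ | r'+1 => PMS m k r' false))
      ∪ ((PMLetter.Lm :: ·) '' (match k with | 0 => ∅ | k'+1 => PMS m k' r true)) := by
  ext w
  match w with
  | [] =>
    simp [PMS]
  | x :: t =>
    cases x with
    | R =>
      have hb : ∀ p : Prop, (b = true → ¬ p) ↔ (p → b = false) := by
        intro p; cases b <;> simp
      cases b with
      | false =>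
        simp [PMS, ProperlyMarked, List.Chain', List.isChain_cons]
      | true =>
        simp [PMS]
    | Lu =>
      match r with
      | 0 =>
        simp [PMS]
      | r'+1 =>
        simp [PMS, ProperlyMarked, List.Chain', List.isChain_cons]
    | Lm =>
      match k with
      | 0 =>
        simp [PMS]
      | k'+1 =>
        simp [PMS, ProperlyMarked, List.Chain', List.isChain_cons]
        intro _
        constructor
        · rintro ⟨⟨hh, h2⟩, h3, h4⟩
          exact ⟨h2, h3, h4, fun hcon => hh PMLetter.R hcon rfl⟩
        · rintro ⟨h2, h3, h4, h5⟩
          exact ⟨⟨fun y hy hyR => h5 (by rw [hyR] at hy; exact hy), h2⟩, h3, h4⟩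

theorem PMS_ncard : ∀ m k r b, (PMS m k r b).ncard = pmF m k r b := by
  intro m
  induction m with
  | zero =>
    intro k r b
    match k, r with
    | 0, 0 =>
      have : PMS 0 0 0 b = {[]} := by
        ext w
        constructor
        · rintro ⟨h1, _⟩
          exact List.length_eq_zero_iff.mp h1
        · rintro rfl
          exact ⟨rfl, List.isChain_nil, rfl, rfl, by simp⟩
      rw [this, Set.ncard_singleton]
      rfl
    | k'+1, r =>
      have : PMS 0 (k'+1) r b = ∅ := by
        ext w
        simp only [Set.mem_empty_iff_false, iff_false]
        rintro ⟨h1, _, h3, _⟩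
        rw [List.length_eq_zero_iff.mp h1] at h3
        simp at h3
      rw [this, Set.ncard_empty]
      rfl
    | 0, r'+1 =>
      have : PMS 0 0 (r'+1) b = ∅ := by
        ext w
        simp only [Set.mem_empty_iff_false, iff_false]
        rintro ⟨h1, _, _, h4, _⟩
        rw [List.length_eq_zero_iff.mp h1] at h4
        simp at h4
      rw [this, Set.ncard_empty]
      rfl
  | succ m ih =>
    intro k r b
    rw [PMS_succ_eq, ncard3 _ _ _
      (by cases b
          · exact PMS_finite m k r false
          · exact Set.finite_empty)
      (by match r with
          | 0 => exact Set.finite_empty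
          | r'+1 => exact PMS_finite m k r' false)
      (by match k with
          | 0 => exact Set.finite_empty
          | k'+1 => exact PMS_finite m k' r true)]
    cases b <;> rcases r with _ | r' <;> rcases k with _ | k' <;>
      simp [ih, pmF, Set.ncard_empty]

theorem pm_words_count (n k r : ℕ) (hn : 1 ≤ n) (h : k + r ≤ n - 1) :
    Set.ncard {w : List PMLetter | w.length = n - 1 ∧ ProperlyMarked w ∧
        w.count PMLetter.Lm = k ∧ w.count PMLetter.Lu = r} =
      Nat.choose (n - k - 1) r * Nat.choose (r + k) r := by
  have hset : {w : List PMLetter | w.length = n - 1 ∧ ProperlyMarked w ∧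
        w.count PMLetter.Lm = k ∧ w.count PMLetter.Lu = r} = PMS (n-1) k r false := by
    ext w; simp [PMS]
  rw [hset, PMS_ncard, (pmF_closed (n-1)).1 k r h]
  have e1 : n - 1 - k = n - k - 1 := by omega
  rw [e1, Nat.add_comm k r]
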